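/- Over a field (or commutative ring) K of prime characteristic p, the p-fold shuffle power of any formal power series A ∈ K[[X]] equals the constant series (A,1)^p, i.e. A^{⧢p} = α₀^p where α₀ is the constant coefficient of A. In particular, every element of 1 + X·K[[X]] has order dividing p in the shuffle group. -/

import Mathlib

open PowerSeries

/-- The shuffle product of formal power series. -/
noncomputable def shuffle {K : Type*} [CommRing K] (A B : PowerSeries K) : PowerSeries K :=
  PowerSeries.mk fun n => ∑ k ∈ Finset.range (n + 1),
    (n.choose k : K) * (coeff k A) * (coeff (n - k) B)

/-- Iterated shuffle powers. -/
noncomputable def shufflePow {K : Type*} [CommRing K] (A : PowerSeries K) : ℕ → PowerSeries K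
  | 0 => 1
  | n + 1 => shuffle A (shufflePow A n)

namespace ShuffleAux

lemma choose_swap (n k j : ℕ) :
    n.choose k * (n - k).choose j = n.choose j * (n - j).choose k := by
  rcases le_or_gt (k + j) n with h | h
  · have h1 := Nat.choose_mul (n := n) (Nat.le_add_right k j)
    have h2 := Nat.choose_mul (n := n) (Nat.le_add_right j k)
    rw [Nat.add_sub_cancel_left] at h1 h2
    have hs : (k + j).choose j = (k + j).choose k := by
      rw [← Nat.choose_symm (Nat.le_add_right k j), Nat.add_sub_cancel_left]
    rw [← h1, ← h2, Nat.add_comm j k, hs]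
  · have hl : n.choose k * (n - k).choose j = 0 := by
      rcases le_or_gt k n with hk | hk
      · rw [Nat.choose_eq_zero_of_lt (show n - k < j by omega), mul_zero]
      · rw [Nat.choose_eq_zero_of_lt hk, zero_mul]
    have hr : n.choose j * (n - j).choose k = 0 := by
      rcases le_or_gt j n with hj | hj
      · rw [Nat.choose_eq_zero_of_lt (show n - j < k by omega), mul_zero]
      · rw [Nat.choose_eq_zero_of_lt hj, zero_mul]
    rw [hl, hr]

variable {K : Type*} [CommRing K]

lemma coeff_shuffle (A B : PowerSeries K) (n : ℕ) :
    coeff n (shuffle A B) = ∑ k ∈ Finset.range (n + 1),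
      (n.choose k : K) * (coeff k A) * (coeff (n - k) B) :=
  coeff_mk _ _

/-- The "Hurwitz derivative" (coefficient shift). -/
noncomputable def D (A : PowerSeries K) : PowerSeries K :=
  PowerSeries.mk fun n => coeff (n + 1) A

lemma coeff_D (A : PowerSeries K) (n : ℕ) : coeff n (D A) = coeff (n + 1) A :=
  coeff_mk _ _

lemma D_one : D (1 : PowerSeries K) = 0 := by
  ext n
  simp [coeff_D, PowerSeries.coeff_one]

lemma shuffle_one (A : PowerSeries K) : shuffle A 1 = A := by
  ext n
  rw [coeff_shuffle, Finset.sum_range_succ, Finset.sum_eq_zero, zero_add]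
  · simp
  · intro k hk
    rw [Finset.mem_range] at hk
    rw [PowerSeries.coeff_one, if_neg (by omega), mul_zero]

lemma shuffle_smul (c : K) (A B : PowerSeries K) : shuffle A (c • B) = c • shuffle A B := by
  ext n
  simp only [coeff_shuffle, map_smul, smul_eq_mul]
  rw [Finset.mul_sum]
  exact Finset.sum_congr rfl fun k _ => by ring

lemma coeff_shuffle_shuffle (A B C : PowerSeries K) (n : ℕ) :
    coeff n (shuffle A (shuffle B C)) =
      ∑ k ∈ Finset.range (n + 1), ∑ j ∈ Finset.range (n + 1),
        ((n.choose k * (n - k).choose j : ℕ) : K) *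
          coeff k A * coeff j B * coeff (n - k - j) C := by
  rw [coeff_shuffle]
  refine Finset.sum_congr rfl fun k hk => ?_
  rw [Finset.mem_range] at hk
  rw [coeff_shuffle, Finset.mul_sum]
  rw [← Finset.sum_subset (Finset.range_subset_range.2 (show n - k + 1 ≤ n + 1 by omega))
    (fun j _ hj => ?_)]
  · exact Finset.sum_congr rfl fun j _ => by push_cast; ring
  · rw [Finset.mem_range, not_lt] at hj
    rw [Nat.choose_eq_zero_of_lt (show n - k < j by omega)]
    push_cast
    ring

lemma shuffle_left_comm (A B C : PowerSeries K) :
    shuffle A (shuffle B C) = shuffle B (shuffle A C) := by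
  ext n
  rw [coeff_shuffle_shuffle, coeff_shuffle_shuffle, Finset.sum_comm]
  refine Finset.sum_congr rfl fun j _ => Finset.sum_congr rfl fun k _ => ?_
  rw [choose_swap, show n - k - j = n - j - k by omega]
  ring

lemma D_shuffle (A B : PowerSeries K) :
    D (shuffle A B) = shuffle (D A) B + shuffle A (D B) := by
  ext n
  rw [map_add, coeff_D, coeff_shuffle, coeff_shuffle, coeff_shuffle]
  simp only [coeff_D]
  rw [Finset.sum_range_succ']
  have h2 : ∑ k ∈ Finset.range (n + 1),
      (n.choose k : K) * coeff k A * coeff (n - k + 1) B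
      = ∑ k ∈ Finset.range (n + 1),
        (n.choose (k + 1) : K) * coeff (k + 1) A * coeff (n + 1 - (k + 1)) B
        + (n.choose 0 : K) * coeff 0 A * coeff (n + 1 - 0) B := by
    have e1 := Finset.sum_range_succ'
      (fun k => (n.choose k : K) * coeff k A * coeff (n + 1 - k) B) (n + 1)
    have e2 := Finset.sum_range_succ
      (fun k => (n.choose k : K) * coeff k A * coeff (n + 1 - k) B) (n + 1)
    calc ∑ k ∈ Finset.range (n + 1),
            (n.choose k : K) * coeff k A * coeff (n - k + 1) B
        = ∑ k ∈ Finset.range (n + 1),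
            (n.choose k : K) * coeff k A * coeff (n + 1 - k) B := by
          refine Finset.sum_congr rfl fun k hk => ?_
          rw [Finset.mem_range] at hk
          rw [show n - k + 1 = n + 1 - k by omega]
      _ = ∑ k ∈ Finset.range (n + 1 + 1),
            (n.choose k : K) * coeff k A * coeff (n + 1 - k) B := by
          rw [e2, Nat.choose_succ_self]
          push_cast
          ring
      _ = _ := e1
  rw [h2, ← add_assoc, ← Finset.sum_add_distrib]
  congr 1
  · refine Finset.sum_congr rfl fun k hk => ?_
    rw [Finset.mem_range] at hk
    rw [Nat.choose_succ_succ, show n + 1 - (k + 1) = n - k by omega]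
    push_cast
    ring
  · simp

lemma D_shufflePow (A : PowerSeries K) :
    ∀ m, D (shufflePow A (m + 1)) = ((m + 1 : ℕ) : K) • shuffle (D A) (shufflePow A m)
  | 0 => by
    show D (shuffle A (shufflePow A 0)) = _
    show D (shuffle A 1) = _
    rw [D_shuffle, shuffle_one, D_one]
    show D A + shuffle A 0 = _
    have : shuffle A (0 : PowerSeries K) = 0 := by
      ext n; simp [coeff_shuffle]
    rw [this, add_zero]
    show D A = ((1 : ℕ) : K) • shuffle (D A) 1
    rw [shuffle_one]
    simp
  | m + 1 => by
    show D (shuffle A (shufflePow A (m + 1))) = _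
    rw [D_shuffle, D_shufflePow A m, shuffle_smul, shuffle_left_comm]
    have hP : shuffle A (shufflePow A m) = shufflePow A (m + 1) := rfl
    rw [hP]
    push_cast
    module

lemma constantCoeff_shufflePow (A : PowerSeries K) :
    ∀ m, constantCoeff (shufflePow A m) = (constantCoeff A) ^ m
  | 0 => by simp [shufflePow]
  | m + 1 => by
    show constantCoeff (shuffle A (shufflePow A m)) = _
    rw [← coeff_zero_eq_constantCoeff, coeff_shuffle]
    simp [coeff_zero_eq_constantCoeff, constantCoeff_shufflePow A m, pow_succ, mul_comm]

lemma eq_C_of_D_eq_zero (B : PowerSeries K) (h : D B = 0) :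
    B = PowerSeries.C (constantCoeff B) := by
  ext n
  cases n with
  | zero => simp
  | succ n =>
    have := congrArg (coeff n) h
    rw [coeff_D, map_zero] at this
    rw [this, PowerSeries.coeff_C, if_neg (Nat.succ_ne_zero n)]

end ShuffleAux

/-- In characteristic `p`, the `p`-fold shuffle power of any power series is the constant
series `α₀^p`; in particular every element of `1 + X·K[[X]]` has order dividing `p` in the
shuffle group. -/
theorem shufflePow_char_p {K : Type*} [CommRing K] (p : ℕ) [hp : Fact p.Prime] [CharP K p]
    (A : PowerSeries K) :
    shufflePow A p = PowerSeries.C ((constantCoeff A) ^ p) ∧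
    (constantCoeff A = 1 → shufflePow A p = 1) := by
  open ShuffleAux in
  have hD : ShuffleAux.D (shufflePow A p) = 0 := by
    obtain ⟨m, hm⟩ : ∃ m, p = m + 1 := ⟨p - 1, by have := hp.out.pos; omega⟩
    rw [hm, ShuffleAux.D_shufflePow]
    rw [← hm, CharP.cast_eq_zero K p, zero_smul]
  have h1 : shufflePow A p = PowerSeries.C ((constantCoeff A) ^ p) := by
    rw [ShuffleAux.eq_C_of_D_eq_zero _ hD, ShuffleAux.constantCoeff_shufflePow]
  refine ⟨h1, fun h0 => ?_⟩
  rw [h1, h0, one_pow, map_one]
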